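/- Let N : ℤ^{≥0} × ℤ^{≥0} → ℚ be any function. Then there is at most one function W, defined on triples (a,b,l) of nonnegative integers with (a,b) ≠ (0,0), such that: W(a,b,l) = W(b,a,l) for all (a,b,l); W(1,b,l) = 1 whenever 0 ≤ l ≤ b; W(a,0,l) = 0 for all a ≥ 2 and all l; W(a,b,l) = 0 whenever 2l > 2(a+b)−1; W satisfies recursion (τ1a) at every (a,b,l) with (a,b) ≠ (0,0), l ≥ 1, and a+b−l ≥ 1; and W satisfies recursion (τ1b) at every (a,b) with a ≥ 2 and b ≥ 1. That is, any two such functions agree everywhere. -/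

import Mathlib

open Finset

/-- Binomial coefficient `C(n,k)` as a rational number, with the convention that
`C(n,k) = 0` whenever `k < 0` or `k > n`. -/
def binom (n k : ℤ) : ℚ :=
  if 0 ≤ k ∧ k ≤ n then (n.toNat.choose k.toNat : ℚ) else 0

/-- Quadruples `(a',b')` (recording `(a₀,b₀) = (a−2a', b−2b')`) with
`a₀ + 2a' = a`, `b₀ + 2b' = b`, `(a₀,b₀) ≠ (0,0)` and `(a',b') ≠ (0,0)`. -/
def quadHalf (a b : ℕ) : Finset (ℕ × ℕ) :=
  (Finset.range (a + 1) ×ˢ Finset.range (b + 1)).filter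
    fun p => 2 * p.1 ≤ a ∧ 2 * p.2 ≤ b ∧ 1 ≤ p.1 + p.2
      ∧ 1 ≤ (a - 2 * p.1) + (b - 2 * p.2)

/-- Splittings `((a₁,a₂),(b₁,b₂))` with `a₁+a₂ = a`, `b₁+b₂ = b`,
`(a₁,b₁) ≠ (0,0)` and `(a₂,b₂) ≠ (0,0)`. -/
def quadSum (a b : ℕ) : Finset ((ℕ × ℕ) × (ℕ × ℕ)) :=
  (Finset.HasAntidiagonal.antidiagonal a ×ˢ Finset.HasAntidiagonal.antidiagonal b).filter
    fun pq => 1 ≤ pq.1.1 + pq.2.1 ∧ 1 ≤ pq.1.2 + pq.2.2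

/-- The term `T₀ = −2^{l−3} a b N(a/2,b/2)` if `a` and `b` are both even and
`l = a+b−1`, and `0` otherwise; the power `2^{l−3}` is taken in `ℚ`. -/
def T0pr (N : ℕ → ℕ → ℚ) (a b l : ℕ) : ℚ :=
  if Even a ∧ Even b ∧ l + 1 = a + b then
    -((2 : ℚ) ^ ((l : ℤ) - 3)) * (a : ℚ) * (b : ℚ) * N (a / 2) (b / 2)
  else 0

/-- Recursion (τ1a) for the Welschinger invariants of `(ℙ¹×ℙ¹, τ₁,₁)`. -/
def RecT1a (N : ℕ → ℕ → ℚ) (W : ℕ → ℕ → ℕ → ℚ) (a b l : ℕ) : Prop :=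
  W a b l = T0pr N a b l
    - ∑ p ∈ quadHalf a b,
        (2 : ℚ) ^ (2 * (p.1 + p.2) - 1) * (p.1 : ℚ) * (p.2 : ℚ)
          * (((a - 2 * p.1 : ℕ) : ℚ) * (p.2 : ℚ) + ((b - 2 * p.2 : ℕ) : ℚ) * (p.1 : ℚ))
          * binom ((l : ℤ) - 1) (2 * ((p.1 : ℤ) + (p.2 : ℤ)) - 1)
          * N p.1 p.2 * W (a - 2 * p.1) (b - 2 * p.2) (l - 2 * (p.1 + p.2))
    + ∑ pq ∈ quadSum a b, ∑ r ∈ Finset.HasAntidiagonal.antidiagonal (l - 1),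
        (pq.2.1 : ℚ) * binom ((l : ℤ) - 1) (r.1 : ℤ)
          * ((pq.1.2 : ℚ)
                * binom (2 * ((a : ℤ) + (b : ℤ)) - 2 * (l : ℤ) - 2)
                    (2 * ((pq.1.1 : ℤ) + (pq.2.1 : ℤ)) - 2 * (r.1 : ℤ) - 2)
              - (pq.1.1 : ℚ)
                * binom (2 * ((a : ℤ) + (b : ℤ)) - 2 * (l : ℤ) - 2)
                    (2 * ((pq.1.1 : ℤ) + (pq.2.1 : ℤ)) - 2 * (r.1 : ℤ) - 1))
          * W pq.1.1 pq.2.1 r.1 * W pq.1.2 pq.2.2 r.2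

/-- Recursion (τ1b) for the purely real Welschinger invariants of
`(ℙ¹×ℙ¹, τ₁,₁)`. -/
def RecT1b (W : ℕ → ℕ → ℕ → ℚ) (a b : ℕ) : Prop :=
  W a b 0 = (1 / (2 * ((a : ℚ) - 1))) *
    ∑ pq ∈ (Finset.HasAntidiagonal.antidiagonal a ×ˢ Finset.HasAntidiagonal.antidiagonal (b + 1)).filter
        (fun pq => 1 ≤ pq.1.1 ∧ 1 ≤ pq.1.2 ∧ 1 ≤ pq.2.1 ∧ 1 ≤ pq.2.2),
      ((pq.2.1 : ℚ) * (pq.2.2 : ℚ)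
            * binom (2 * ((a : ℤ) + (b : ℤ)) - 2)
                (2 * ((pq.1.1 : ℤ) + (pq.2.1 : ℤ)) - 2)
          - (pq.2.1 : ℚ) ^ 2
            * binom (2 * ((a : ℤ) + (b : ℤ)) - 2)
                (2 * ((pq.1.1 : ℤ) + (pq.2.1 : ℤ)) - 1))
        * W pq.1.1 pq.2.1 0 * W pq.1.2 pq.2.2 0

/-- The conditions on the Welschinger invariants `W(a,b,l)` of `(ℙ¹×ℙ¹, τ₁,₁)`:
symmetry, base cases, dimension vanishing, and recursions (τ1a) and (τ1b). -/
def GoodWpr (N : ℕ → ℕ → ℚ) (W : ℕ → ℕ → ℕ → ℚ) : Prop :=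
  (∀ a b l : ℕ, 1 ≤ a + b → W a b l = W b a l)
    ∧ (∀ b l : ℕ, l ≤ b → W 1 b l = 1)
    ∧ (∀ a l : ℕ, 2 ≤ a → W a 0 l = 0)
    ∧ (∀ a b l : ℕ, 1 ≤ a + b → a + b ≤ l → W a b l = 0)
    ∧ (∀ a b l : ℕ, 1 ≤ l → l + 1 ≤ a + b → RecT1a N W a b l)
    ∧ (∀ a b : ℕ, 2 ≤ a → 1 ≤ b → RecT1b W a b)

/-- There is at most one function `W` on triples `(a,b,l)` with `(a,b) ≠ (0,0)`
satisfying all the conditions of `GoodWpr`. -/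
theorem stmt_10 (N : ℕ → ℕ → ℚ) (W W' : ℕ → ℕ → ℕ → ℚ)
    (hW : GoodWpr N W) (hW' : GoodWpr N W') :
    ∀ a b l : ℕ, 1 ≤ a + b → W a b l = W' a b l := by
  obtain ⟨hsym, hb1, hb0, hvan, hta, htb⟩ := hW
  obtain ⟨hsym', hb1', hb0', hvan', hta', htb'⟩ := hW'
  suffices H : ∀ n, ∀ a b l : ℕ, a + b = n → 1 ≤ a + b → W a b l = W' a b l by
    intro a b l h; exact H (a + b) a b l rfl h
  intro n
  induction n using Nat.strong_induction_on with
  | _ n IH =>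
  intro a b l hn hab
  subst hn
  have ih : ∀ a' b' l' : ℕ, a' + b' < a + b → 1 ≤ a' + b' → W a' b' l' = W' a' b' l' :=
    fun a' b' l' h h1 => IH _ h a' b' l' rfl h1
  rcases Nat.eq_zero_or_pos l with rfl | hl
  · -- l = 0
    match a, b with
    | 0, b =>
      rw [hsym 0 b 0 hab, hsym' 0 b 0 hab]
      match b with
      | 1 => rw [hb1 0 0 le_rfl, hb1' 0 0 le_rfl]
      | (b+2) => rw [hb0 _ 0 (by omega), hb0' _ 0 (by omega)]
    | 1, b => rw [hb1 b 0 (Nat.zero_le b), hb1' b 0 (Nat.zero_le b)]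
    | (a+2), 0 => rw [hb0 _ 0 (by omega), hb0' _ 0 (by omega)]
    | (a+2), (b+1) =>
      rw [htb _ _ (by omega) (by omega), htb' _ _ (by omega) (by omega)]
      congr 1
      apply Finset.sum_congr rfl
      intro pq hpq
      simp only [Finset.mem_filter, Finset.mem_product, Finset.HasAntidiagonal.mem_antidiagonal] at hpq
      obtain ⟨⟨h1, h2⟩, h3, h4, h5, h6⟩ := hpq
      rw [ih pq.1.1 pq.2.1 0 (by omega) (by omega),
          ih pq.1.2 pq.2.2 0 (by omega) (by omega)]
  · -- l ≥ 1
    rcases le_or_gt (a + b) l with hle | hlt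
    · rw [hvan a b l hab hle, hvan' a b l hab hle]
    · rw [hta a b l hl (by omega), hta' a b l hl (by omega)]
      congr 1
      · congr 1
        apply Finset.sum_congr rfl
        intro p hp
        simp only [quadHalf, Finset.mem_filter, Finset.mem_product, Finset.mem_range] at hp
        obtain ⟨⟨h1, h2⟩, h3, h4, h5, h6⟩ := hp
        rw [ih (a - 2 * p.1) (b - 2 * p.2) (l - 2 * (p.1 + p.2)) (by omega) (by omega)]
      · apply Finset.sum_congr rfl
        intro pq hpq
        simp only [quadSum, Finset.mem_filter, Finset.mem_product,
          Finset.HasAntidiagonal.mem_antidiagonal] at hpq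
        obtain ⟨⟨h1, h2⟩, h3, h4⟩ := hpq
        apply Finset.sum_congr rfl
        intro r hr
        rw [ih pq.1.1 pq.2.1 r.1 (by omega) (by omega),
            ih pq.1.2 pq.2.2 r.2 (by omega) (by omega)]
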